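/- Let k be a positive integer with 1 ≤ k ≤ n/2, let f_0, f_1, …, f_n be real numbers with f_0 > 0, with f_j ≤ 0 for every odd j with 1 ≤ j ≤ n and for every j with 2k+1 ≤ j ≤ n, and set f(t) := ∑_{j=0}^n f_j·Q_j^{(n)}(t). Suppose f(t) ≥ 0 for every t ∈ T_n := {−1 + 2i/n : i = 0, 1, …, n}. If a (k,k)-design C ⊆ F_2^n satisfies |C| = f(1)/f_0, then f(⟨x,y⟩) = 0 for all distinct x, y ∈ C, and f_i·M_i(C) = 0 for every i with 1 ≤ i ≤ n. -/

import Mathlib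

open Finset

/-- The Krawtchouk polynomials `Q_i^{(n)}(t)`, determined by `Q_0 = 1`, `Q_1 = t` and the
three-term recurrence `n·t·Q_i(t) = (n−i)·Q_{i+1}(t) + i·Q_{i−1}(t)`. -/
noncomputable def kraw (n : ℕ) : ℕ → ℝ → ℝ
  | 0, _ => 1
  | 1, t => t
  | (i+2), t =>
      ((n : ℝ) * t * kraw n (i+1) t - ((i : ℝ) + 1) * kraw n i t) / ((n : ℝ) - ((i : ℝ) + 1))

/-- The "inner product" `⟨x,y⟩ = 1 − 2 d(x,y)/n`. -/
noncomputable def ip (n : ℕ) (x y : Fin n → ZMod 2) : ℝ :=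
  1 - 2 * (hammingDist x y : ℝ) / (n : ℝ)

/-- The `i`-th moment `M_i(C) = ∑_{x,y ∈ C} Q_i^{(n)}(⟨x,y⟩)`. -/
noncomputable def moment (n : ℕ) (C : Finset (Fin n → ZMod 2)) (i : ℕ) : ℝ :=
  ∑ x ∈ C, ∑ y ∈ C, kraw n i (ip n x y)

/-- The antipodal (complement) point `−x`. -/
def antip {n : ℕ} (x : Fin n → ZMod 2) : Fin n → ZMod 2 := fun j => x j + 1

/-- `C` is a `(k,k)`-design: a nonempty code with `M_i(C) = 0` for all even `i` with `2 ≤ i ≤ 2k`. -/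
def IsKKDesign (n k : ℕ) (C : Finset (Fin n → ZMod 2)) : Prop :=
  C.Nonempty ∧ ∀ j : ℕ, 1 ≤ j → j ≤ k → moment n C (2 * j) = 0

/-- `C` is an `m`-design: a nonempty code with `M_i(C) = 0` for all `1 ≤ i ≤ m`. -/
def IsMDesign (n m : ℕ) (C : Finset (Fin n → ZMod 2)) : Prop :=
  C.Nonempty ∧ ∀ i : ℕ, 1 ≤ i → i ≤ m → moment n C i = 0

/-- Generalized binomial coefficient `C(z,j)` for real `z`. -/
noncomputable def gchoose (z : ℝ) (j : ℕ) : ℝ :=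
  (∏ i ∈ Finset.range j, (z - (i : ℝ))) / (Nat.factorial j : ℝ)

/-- The Krawtchouk polynomial `K_i^{(m)}(z)` in the variable `z`. -/
noncomputable def krawK (m i : ℕ) (z : ℝ) : ℝ :=
  ∑ j ∈ Finset.range (i + 1), (-1 : ℝ) ^ j * gchoose z j * gchoose ((m : ℝ) - z) (i - j)

/-- The adjacent polynomial `Q_i^{1,1}(t) = K_i^{(n−2)}(n(1−t)/2 − 1) / ∑_{j=0}^i C(n−1,j)`. -/
noncomputable def Q11 (n i : ℕ) (t : ℝ) : ℝ :=
  krawK (n - 2) i ((n : ℝ) * (1 - t) / 2 - 1) /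
    (∑ j ∈ Finset.range (i + 1), ((n - 1).choose j : ℝ))


section Aux
open Polynomial

noncomputable def chi (a : ZMod 2) : ℝ := if a = 0 then 1 else -1

def dotp {n : ℕ} (z w : Fin n → ZMod 2) : ZMod 2 := ∑ j, z j * w j

lemma zmod2_cases : ∀ a : ZMod 2, a = 0 ∨ a = 1 := by decide

lemma chi_zero : chi 0 = 1 := by simp [chi]

lemma chi_add (a b : ZMod 2) : chi (a + b) = chi a * chi b := by
  rcases zmod2_cases a with ha | ha <;> rcases zmod2_cases b with hb | hb <;>
    simp [ha, hb, chi, (by decide : (1 + 1 : ZMod 2) = 0)]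

lemma chi_sub (a b : ZMod 2) : chi (a - b) = chi a * chi b := by
  rcases zmod2_cases a with ha | ha <;> rcases zmod2_cases b with hb | hb <;>
    simp [ha, hb, chi, (by decide : (1 - 1 : ZMod 2) = 0), (by decide : (0 - 1 : ZMod 2) = 1)]

lemma chi_sum {ι : Type*} (s : Finset ι) (g : ι → ZMod 2) :
    chi (∑ j ∈ s, g j) = ∏ j ∈ s, chi (g j) := by
  induction s using Finset.cons_induction with
  | empty => simp [chi]
  | cons a s ha ih => rw [Finset.sum_cons, Finset.prod_cons, chi_add, ih]

noncomputable def Kp (n d : ℕ) : Polynomial ℝ := (1 + X) ^ (n - d) * (1 - X) ^ d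

noncomputable def Kc (n d i : ℕ) : ℝ := (Kp n d).coeff i

lemma genfun (n : ℕ) (w : Fin n → ZMod 2) :
    ∑ z : Fin n → ZMod 2, Polynomial.C (chi (dotp z w)) * X ^ (hammingDist z 0) =
      Kp n (hammingDist w 0) := by
  have hterm : ∀ z : Fin n → ZMod 2,
      Polynomial.C (chi (dotp z w)) * X ^ (hammingDist z 0) =
        ∏ j, (Polynomial.C (chi (z j * w j)) * (if z j = 0 then 1 else X)) := by
    intro z
    rw [Finset.prod_mul_distrib]
    have h1 : Polynomial.C (chi (dotp z w)) = ∏ j, Polynomial.C (chi (z j * w j)) := by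
      rw [dotp, chi_sum, map_prod]
    have h2 : (X : Polynomial ℝ) ^ (hammingDist z 0) = ∏ j, (if z j = 0 then 1 else X) := by
      rw [Finset.prod_ite (fun _ => (1 : Polynomial ℝ)) (fun _ => (X : Polynomial ℝ)),
        Finset.prod_const_one, Finset.prod_const, one_mul]
      congr 1
    rw [h1, h2]
  simp only [hterm]
  have key := Finset.prod_univ_sum (fun _ : Fin n => (Finset.univ : Finset (ZMod 2)))
    (fun j a => Polynomial.C (chi (a * w j)) * (if a = 0 then 1 else X))
  rw [Fintype.piFinset_univ] at key
  rw [← key]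
  have huniv : (Finset.univ : Finset (ZMod 2)) = {0, 1} := by decide
  have hsum : ∀ j, (∑ a : ZMod 2, Polynomial.C (chi (a * w j)) * (if a = 0 then 1 else X)) =
      (if w j = 0 then 1 + X else 1 - X) := by
    intro j
    rw [huniv, Finset.sum_insert (by decide), Finset.sum_singleton]
    rcases zmod2_cases (w j) with h | h <;> simp [h, chi, sub_eq_add_neg, map_neg]
  rw [Finset.prod_congr rfl (fun j _ => hsum j)]
  rw [Finset.prod_ite (fun _ => ((1:Polynomial ℝ) + X)) (fun _ => ((1:Polynomial ℝ) - X)),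
    Finset.prod_const, Finset.prod_const, Kp]
  congr 2
  · have h1 : (Finset.univ.filter (fun j => w j = 0)).card
        + (Finset.univ.filter (fun j => ¬ w j = 0)).card = n := by
      rw [Finset.card_filter_add_card_filter_not]; simp
    have h2 : hammingDist w 0 = (Finset.univ.filter (fun j => ¬ w j = 0)).card := by
      simp [hammingDist]
    omega

lemma Kc_eq (n : ℕ) (w : Fin n → ZMod 2) (i : ℕ) :
    Kc n (hammingDist w 0) i =
      ∑ z : Fin n → ZMod 2, (if hammingDist z 0 = i then chi (dotp z w) else 0) := by
  rw [Kc, ← genfun n w, Polynomial.finset_sum_coeff]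
  refine Finset.sum_congr rfl fun z _ => ?_
  rw [Polynomial.coeff_C_mul, Polynomial.coeff_X_pow]
  by_cases h : hammingDist z 0 = i
  · rw [if_pos h.symm, if_pos h, mul_one]
  · rw [if_neg (Ne.symm h), if_neg h, mul_zero]

lemma deriv_onep (a : ℕ) :
    derivative ((1 + X : Polynomial ℝ) ^ a) * (1 + X) = C (a : ℝ) * (1 + X) ^ a := by
  cases a with
  | zero => simp
  | succ a =>
    rw [derivative_pow]
    simp only [derivative_add, derivative_one, derivative_X, zero_add, mul_one,
      Nat.add_sub_cancel]
    rw [mul_assoc, ← pow_succ]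

lemma deriv_onem (b : ℕ) :
    derivative ((1 - X : Polynomial ℝ) ^ b) * (1 - X) = C (-(b : ℝ)) * (1 - X) ^ b := by
  cases b with
  | zero => simp
  | succ b =>
    rw [derivative_pow]
    simp only [derivative_sub, derivative_one, derivative_X, zero_sub,
      Nat.add_sub_cancel]
    rw [map_neg]
    push_cast
    ring

lemma poly_id (n d : ℕ) (hd : d ≤ n) :
    (1 - X ^ 2) * derivative (Kp n d) =
      (C ((n : ℝ) - 2 * d) - C (n : ℝ) * X) * Kp n d := by
  have h1 := deriv_onep (n - d)
  have h2 := deriv_onem d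
  have hcast : ((n - d : ℕ) : ℝ) = (n : ℝ) - d := by
    push_cast [Nat.cast_sub hd]; ring
  have expand : (1 - X ^ 2 : Polynomial ℝ) = (1 + X) * (1 - X) := by ring
  rw [Kp, derivative_mul, expand]
  calc (1 + X) * (1 - X) *
      (derivative ((1 + X : Polynomial ℝ) ^ (n - d)) * (1 - X) ^ d +
        (1 + X) ^ (n - d) * derivative ((1 - X : Polynomial ℝ) ^ d))
      = (derivative ((1 + X : Polynomial ℝ) ^ (n - d)) * (1 + X)) * ((1 - X) ^ d * (1 - X))
        + (derivative ((1 - X : Polynomial ℝ) ^ d) * (1 - X)) * ((1 + X) ^ (n - d) * (1 + X)) := by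
        ring
    _ = (C (((n - d : ℕ) : ℝ)) * (1 + X) ^ (n - d)) * ((1 - X) ^ d * (1 - X))
        + (C (-(d : ℝ)) * (1 - X) ^ d) * ((1 + X) ^ (n - d) * (1 + X)) := by rw [h1, h2]
    _ = (C ((n : ℝ) - 2 * d) - C (n : ℝ) * X) * ((1 + X) ^ (n - d) * (1 - X) ^ d) := by
        rw [hcast]
        have : (C ((n:ℝ) - 2*d) : Polynomial ℝ) = C ((n:ℝ) - d) * 1 + C (-(d:ℝ)) := by
          rw [mul_one, ← map_add]; ring_nf
        have hC2 : (C ((n:ℝ)) : Polynomial ℝ) * X = C ((n:ℝ) - d) * X - C (-(d:ℝ)) * X := by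
          rw [← sub_mul, map_neg, sub_neg_eq_add, ← map_add]; ring_nf
        rw [this, hC2]
        ring

lemma Kc_rec (n d : ℕ) (hd : d ≤ n) (i : ℕ) :
    ((i : ℝ) + 2) * Kc n d (i + 2) =
      ((n : ℝ) - 2 * d) * Kc n d (i + 1) - ((n : ℝ) - i) * Kc n d i := by
  have h := poly_id n d hd
  have hco := congrArg (fun p : Polynomial ℝ => p.coeff (i + 1)) h
  have hL : ((1 - X ^ 2) * derivative (Kp n d)).coeff (i + 1)
      = Kc n d (i + 2) * ((i : ℝ) + 2) - Kc n d i * i := by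
    rw [sub_mul, one_mul]
    rw [Polynomial.coeff_sub]
    rw [mul_comm (X ^ 2 : Polynomial ℝ), Polynomial.coeff_mul_X_pow']
    rw [Polynomial.coeff_derivative]
    congr 1
    · rw [Kc]; push_cast; ring_nf
    · cases i with
      | zero => simp
      | succ j =>
        simp only [Nat.add_sub_cancel, if_pos (by omega : 2 ≤ j + 1 + 1)]
        rw [show j + 1 + 1 - 2 = j from rfl, Polynomial.coeff_derivative, Kc]
        push_cast; ring
  have hR : ((C ((n : ℝ) - 2 * d) - C (n : ℝ) * X) * Kp n d).coeff (i + 1)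
      = ((n : ℝ) - 2 * d) * Kc n d (i + 1) - (n : ℝ) * Kc n d i := by
    rw [sub_mul, Polynomial.coeff_sub, Polynomial.coeff_C_mul, mul_assoc,
      Polynomial.coeff_C_mul, Polynomial.coeff_X_mul, Kc, Kc]
  rw [hL, hR] at hco
  linarith [hco]

lemma Kc_zero (n d : ℕ) : Kc n d 0 = 1 := by
  rw [Kc, Polynomial.coeff_zero_eq_eval_zero, Kp]
  simp

lemma Kc_one (n d : ℕ) (hd : d ≤ n) : Kc n d 1 = (n : ℝ) - 2 * d := by
  have h := poly_id n d hd
  have hco := congrArg (fun p : Polynomial ℝ => p.coeff 0) h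
  have hL : ((1 - X ^ 2) * derivative (Kp n d)).coeff 0 = Kc n d 1 := by
    rw [sub_mul, one_mul, Polynomial.coeff_sub, mul_comm (X ^ 2 : Polynomial ℝ),
      Polynomial.coeff_mul_X_pow']
    simp [Polynomial.coeff_derivative, Kc]
  have hR : ((C ((n : ℝ) - 2 * d) - C (n : ℝ) * X) * Kp n d).coeff 0
      = ((n : ℝ) - 2 * d) * Kc n d 0 := by
    rw [sub_mul, Polynomial.coeff_sub, Polynomial.coeff_C_mul]
    have : ((C (n : ℝ) * X) * Kp n d).coeff 0 = 0 := by
      rw [mul_assoc, Polynomial.coeff_C_mul]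
      simp [Polynomial.coeff_X_mul_zero]
    rw [this, sub_zero, Kc]
  rw [hL, hR, Kc_zero, mul_one] at hco
  exact hco

lemma kraw_eq_Kc (n : ℕ) (hn : 0 < n) (d : ℕ) (hd : d ≤ n) :
    ∀ i, i ≤ n → kraw n i (1 - 2 * d / n) = Kc n d i / (n.choose i : ℝ) := by
  have hn' : (n : ℝ) ≠ 0 := Nat.cast_ne_zero.mpr hn.ne'
  intro i
  induction i using Nat.twoStepInduction with
  | zero => intro _; simp [kraw, Kc_zero]
  | one =>
    intro _
    rw [show kraw n 1 (1 - 2 * d / n) = 1 - 2 * d / n from rfl, Kc_one n d hd,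
      Nat.choose_one_right]
    field_simp
  | more i ih1 ih2 =>
    intro hin
    have h1 : i + 1 ≤ n := by omega
    have h0 : i ≤ n := by omega
    have e0 := ih1 h0
    have e1 := ih2 h1
    have hrec := Kc_rec n d hd i
    have hc0 : (0:ℝ) < (n.choose i : ℝ) := by exact_mod_cast Nat.choose_pos h0
    have hc1 : (0:ℝ) < (n.choose (i+1) : ℝ) := by exact_mod_cast Nat.choose_pos h1
    have hc2 : (0:ℝ) < (n.choose (i+2) : ℝ) := by exact_mod_cast Nat.choose_pos hin
    have hch1 : ((n.choose (i+1) : ℝ)) * ((i:ℝ) + 1) = (n.choose i : ℝ) * ((n:ℝ) - i) := by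
      have h := Nat.choose_succ_right_eq n i
      have h' : ((n.choose (i+1) * (i+1) : ℕ) : ℝ) = ((n.choose i * (n - i) : ℕ) : ℝ) := by
        exact_mod_cast congrArg (fun m : ℕ => (m : ℝ)) h
      push_cast [Nat.cast_sub h0] at h'
      linarith
    have hch2 : ((n.choose (i+2) : ℝ)) * ((i:ℝ) + 2) = (n.choose (i+1) : ℝ) * ((n:ℝ) - (i+1)) := by
      have h := Nat.choose_succ_right_eq n (i+1)
      have h' : ((n.choose (i+2) * (i+2) : ℕ) : ℝ) = ((n.choose (i+1) * (n - (i+1)) : ℕ) : ℝ) := by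
        exact_mod_cast congrArg (fun m : ℕ => (m : ℝ)) h
      push_cast [Nat.cast_sub h1] at h'
      linarith
    have hnt : (n:ℝ) * (1 - 2 * d / n) = (n:ℝ) - 2 * d := by field_simp
    have hden : (n:ℝ) - ((i:ℝ) + 1) ≠ 0 := by
      have : (i:ℝ) + 1 < (n:ℝ) := by exact_mod_cast (by omega : i + 1 < n)
      linarith
    rw [show kraw n (i+2) (1 - 2 * d / n) =
      ((n : ℝ) * (1 - 2 * d / n) * kraw n (i+1) (1 - 2 * d / n)
        - ((i : ℝ) + 1) * kraw n i (1 - 2 * d / n)) / ((n : ℝ) - ((i : ℝ) + 1)) from rfl,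
      e0, e1, hnt]
    field_simp
    apply mul_right_cancel₀ (b := ((i:ℝ)+2)) (by positivity)
    linear_combination -((n:ℝ)-(i:ℝ)-1) * (n.choose (i+1) : ℝ) * Kc n d i * hch1
      - ((n:ℝ)-(i:ℝ)-1) * (n.choose (i+1) : ℝ) * (n.choose i : ℝ) * hrec
      + (((n:ℝ)-2*(d:ℝ)) * Kc n d (i+1) * (n.choose i : ℝ)
          - (n.choose (i+1) : ℝ) * ((i:ℝ)+1) * Kc n d i) * hch2

lemma dotp_sub {n : ℕ} (z x y : Fin n → ZMod 2) : dotp z (x - y) = dotp z x - dotp z y := by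
  simp [dotp, mul_sub, Finset.sum_sub_distrib]

lemma hamming_le {n : ℕ} (x y : Fin n → ZMod 2) : hammingDist x y ≤ n := by
  simpa using (hammingDist_le_card_fintype (x := x) (y := y))

lemma kraw_ip (n : ℕ) (hn : 0 < n) (i : ℕ) (hin : i ≤ n) (x y : Fin n → ZMod 2) :
    kraw n i (ip n x y) = Kc n (hammingDist x y) i / (n.choose i : ℝ) :=
  kraw_eq_Kc n hn (hammingDist x y) (hamming_le x y) i hin

lemma moment_mul_choose (n : ℕ) (hn : 0 < n) (C : Finset (Fin n → ZMod 2)) (i : ℕ)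
    (hin : i ≤ n) :
    moment n C i * (n.choose i : ℝ) =
      ∑ z : Fin n → ZMod 2,
        (if hammingDist z 0 = i then (∑ x ∈ C, chi (dotp z x)) ^ 2 else 0) := by
  have hc : ((n.choose i : ℝ)) ≠ 0 := by
    exact_mod_cast (Nat.choose_pos hin).ne'
  have step : ∀ x ∈ C, ∀ y ∈ C, kraw n i (ip n x y) * (n.choose i : ℝ)
      = ∑ z : Fin n → ZMod 2,
          (if hammingDist z 0 = i then chi (dotp z x) * chi (dotp z y) else 0) := by
    intro x hx y hy
    rw [kraw_ip n hn i hin, div_mul_cancel₀ _ hc]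
    have hxy : hammingDist x y = hammingDist (x - y) 0 := by
      rw [hammingDist_eq_hammingNorm, hammingDist_zero_right]
      rw [← hammingDist_eq_hammingNorm, hammingDist_comm, hammingDist_eq_hammingNorm, neg_add_eq_sub]
    rw [hxy, Kc_eq]
    refine Finset.sum_congr rfl fun z _ => ?_
    rw [dotp_sub, chi_sub]
  rw [moment, Finset.sum_mul]
  calc (∑ x ∈ C, (∑ y ∈ C, kraw n i (ip n x y)) * (n.choose i : ℝ))
      = ∑ x ∈ C, ∑ y ∈ C, ∑ z : Fin n → ZMod 2,
          (if hammingDist z 0 = i then chi (dotp z x) * chi (dotp z y) else 0) := by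
        refine Finset.sum_congr rfl fun x hx => ?_
        rw [Finset.sum_mul]
        exact Finset.sum_congr rfl fun y hy => step x hx y hy
    _ = ∑ z : Fin n → ZMod 2, ∑ x ∈ C, ∑ y ∈ C,
          (if hammingDist z 0 = i then chi (dotp z x) * chi (dotp z y) else 0) := by
        rw [show (∑ x ∈ C, ∑ y ∈ C, ∑ z : Fin n → ZMod 2,
            (if hammingDist z 0 = i then chi (dotp z x) * chi (dotp z y) else 0))
            = ∑ x ∈ C, ∑ z : Fin n → ZMod 2, ∑ y ∈ C,
            (if hammingDist z 0 = i then chi (dotp z x) * chi (dotp z y) else 0) from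
          Finset.sum_congr rfl fun x _ => Finset.sum_comm]
        exact Finset.sum_comm
    _ = _ := by
        refine Finset.sum_congr rfl fun z _ => ?_
        by_cases h : hammingDist z 0 = i
        · simp only [if_pos h]
          rw [sq, Finset.sum_mul_sum]
        · simp only [if_neg h, Finset.sum_const_zero]

lemma moment_nonneg (n : ℕ) (hn : 0 < n) (C : Finset (Fin n → ZMod 2)) (i : ℕ)
    (hin : i ≤ n) : 0 ≤ moment n C i := by
  have hc : (0:ℝ) < (n.choose i : ℝ) := by exact_mod_cast Nat.choose_pos hin
  have h := moment_mul_choose n hn C i hin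
  have hS : 0 ≤ ∑ z : Fin n → ZMod 2,
      (if hammingDist z 0 = i then (∑ x ∈ C, chi (dotp z x)) ^ 2 else 0) := by
    refine Finset.sum_nonneg fun z _ => ?_
    split
    · positivity
    · exact le_rfl
  nlinarith [hS, hc, h]

lemma moment_zero_eq (n : ℕ) (C : Finset (Fin n → ZMod 2)) :
    moment n C 0 = (C.card : ℝ) * (C.card : ℝ) := by
  simp [moment, show ∀ t, kraw n 0 t = 1 from fun _ => rfl]

end Aux

/-- conditions for equality in the linear programming bound for
`(k,k)`-designs. -/
theorem stmt_6 (n k : ℕ) (hn : 0 < n) (hk : 1 ≤ k) (hkn : 2 * k ≤ n)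
    (f : ℕ → ℝ) (hf0 : 0 < f 0)
    (hfodd : ∀ j : ℕ, 1 ≤ j → j ≤ n → Odd j → f j ≤ 0)
    (hfbig : ∀ j : ℕ, 2 * k + 1 ≤ j → j ≤ n → f j ≤ 0)
    (hfpos : ∀ i : ℕ, i ≤ n →
      0 ≤ ∑ j ∈ Finset.range (n + 1), f j * kraw n j (-1 + 2 * (i : ℝ) / (n : ℝ)))
    (C : Finset (Fin n → ZMod 2)) (hC : IsKKDesign n k C)
    (heq : (C.card : ℝ) = (∑ j ∈ Finset.range (n + 1), f j * kraw n j 1) / f 0) :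
    (∀ x ∈ C, ∀ y ∈ C, x ≠ y →
        ∑ j ∈ Finset.range (n + 1), f j * kraw n j (ip n x y) = 0) ∧
      (∀ i : ℕ, 1 ≤ i → i ≤ n → f i * moment n C i = 0) := by
  have hn' : (n : ℝ) ≠ 0 := Nat.cast_ne_zero.mpr hn.ne'
  set F : (Fin n → ZMod 2) → (Fin n → ZMod 2) → ℝ :=
    fun x y => ∑ j ∈ Finset.range (n + 1), f j * kraw n j (ip n x y) with hF
  set f1 : ℝ := ∑ j ∈ Finset.range (n + 1), f j * kraw n j 1 with hf1
  -- nonnegativity of F on all pairs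
  have hFnn : ∀ x y : Fin n → ZMod 2, 0 ≤ F x y := by
    intro x y
    have hd := hamming_le x y
    have h := hfpos (n - hammingDist x y) (Nat.sub_le _ _)
    have harg : (-1 + 2 * (((n - hammingDist x y : ℕ)) : ℝ) / (n : ℝ)) = ip n x y := by
      rw [Nat.cast_sub hd, ip]
      field_simp
      ring
    rw [harg] at h
    exact h
  -- each f_j * M_j is nonpositive for 1 ≤ j ≤ n
  have h4 : ∀ j : ℕ, 1 ≤ j → j ≤ n → f j * moment n C j ≤ 0 := by
    intro j h1 h2
    rcases Nat.even_or_odd j with he | ho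
    · obtain ⟨m, hm⟩ := he
      by_cases hmk : m ≤ k
      · have hdes := hC.2 m (by omega) hmk
        have : moment n C j = 0 := by rw [hm, show m + m = 2 * m by omega]; exact hdes
        rw [this, mul_zero]
      · have hbig : 2 * k + 1 ≤ j := by omega
        exact mul_nonpos_iff.mpr (Or.inr ⟨hfbig j hbig h2, moment_nonneg n hn C j h2⟩)
    · exact mul_nonpos_iff.mpr (Or.inr ⟨hfodd j h1 h2 ho, moment_nonneg n hn C j h2⟩)
  have hxx : ∀ x : Fin n → ZMod 2, F x x = f1 := by
    intro x
    have : ip n x x = 1 := by simp [ip]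
    simp [hF, this, hf1]
  -- total sums
  have hS1 : ∑ x ∈ C, ∑ y ∈ C, F x y = ∑ j ∈ Finset.range (n + 1), f j * moment n C j := by
    calc ∑ x ∈ C, ∑ y ∈ C, F x y
        = ∑ x ∈ C, ∑ j ∈ Finset.range (n + 1), ∑ y ∈ C, f j * kraw n j (ip n x y) :=
          Finset.sum_congr rfl fun x _ => Finset.sum_comm
      _ = ∑ j ∈ Finset.range (n + 1), ∑ x ∈ C, ∑ y ∈ C, f j * kraw n j (ip n x y) :=
          Finset.sum_comm
      _ = ∑ j ∈ Finset.range (n + 1), f j * moment n C j := by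
          refine Finset.sum_congr rfl fun j _ => ?_
          rw [moment, Finset.mul_sum]
          exact Finset.sum_congr rfl fun x _ => (Finset.mul_sum _ _ _).symm
  have hS2 : ∑ x ∈ C, ∑ y ∈ C, F x y
      = (C.card : ℝ) * f1 + ∑ x ∈ C, ∑ y ∈ C.erase x, F x y := by
    have : ∀ x ∈ C, ∑ y ∈ C, F x y = f1 + ∑ y ∈ C.erase x, F x y := by
      intro x hx
      rw [← Finset.add_sum_erase C (F x) hx, hxx]
    rw [Finset.sum_congr rfl this, Finset.sum_add_distrib, Finset.sum_const, nsmul_eq_mul]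
  have hS3 : ∑ j ∈ Finset.range (n + 1), f j * moment n C j
      = (∑ i ∈ Finset.range n, f (i + 1) * moment n C (i + 1)) + f 0 * ((C.card : ℝ) * C.card) := by
    rw [Finset.sum_range_succ' (fun j => f j * moment n C j) n, moment_zero_eq]
  have hcard : f 0 * (C.card : ℝ) = f1 := by
    rw [heq]
    field_simp
  have hDnn : 0 ≤ ∑ x ∈ C, ∑ y ∈ C.erase x, F x y :=
    Finset.sum_nonneg fun x _ => Finset.sum_nonneg fun y _ => hFnn x y
  have hRnp : (∑ i ∈ Finset.range n, f (i + 1) * moment n C (i + 1)) ≤ 0 :=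
    Finset.sum_nonpos fun i hi => h4 (i + 1) (by omega) (by
      simp only [Finset.mem_range] at hi; omega)
  have hmain : (C.card : ℝ) * f1 + ∑ x ∈ C, ∑ y ∈ C.erase x, F x y
      = (∑ i ∈ Finset.range n, f (i + 1) * moment n C (i + 1)) + f 0 * ((C.card : ℝ) * C.card) := by
    rw [← hS2, hS1, hS3]
  have hff : f 0 * ((C.card : ℝ) * C.card) = (C.card : ℝ) * f1 := by
    linear_combination (C.card : ℝ) * hcard
  have hD0 : ∑ x ∈ C, ∑ y ∈ C.erase x, F x y = 0 := by linarith [hmain, hff, hDnn, hRnp]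
  have hR0 : (∑ i ∈ Finset.range n, f (i + 1) * moment n C (i + 1)) = 0 := by
    linarith [hmain, hff, hDnn, hRnp]
  constructor
  · intro x hx y hy hxy
    have h1 := (Finset.sum_eq_zero_iff_of_nonneg
      (fun x _ => Finset.sum_nonneg fun y _ => hFnn x y)).mp hD0 x hx
    have h2 := (Finset.sum_eq_zero_iff_of_nonneg (fun y _ => hFnn x y)).mp h1 y
      (Finset.mem_erase.mpr ⟨hxy.symm, hy⟩)
    exact h2
  · intro i h1 h2
    obtain ⟨m, rfl⟩ : ∃ m, i = m + 1 := ⟨i - 1, by omega⟩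
    exact (Finset.sum_eq_zero_iff_of_nonpos
      (fun i hi => h4 (i + 1) (by omega) (by simp only [Finset.mem_range] at hi; omega))).mp
      hR0 m (Finset.mem_range.mpr (by omega))
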